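/- Let f : ℝ^n → ℝ be continuously differentiable, C ∈ ℝ with f(x) + C > 0 for all x, and set q₀(x) = √(f(x) + C). Let L ∈ ℝ^{n×n} be symmetric, M ∈ ℝ^{n×n}, and let (φ, q) : [0, T] → ℝ^n × ℝ be continuously differentiable with φ'(t) = −M(Lφ(t) + 2q(t)∇q₀(φ(t))), q'(t) = ⟨∇q₀(φ(t)), φ'(t)⟩, and q(0) = q₀(φ(0)). Then q(t) = q₀(φ(t)) for all t ∈ [0, T]; consequently the quadratized energy (1/2)⟨φ(t), Lφ(t)⟩ + q(t)² − C equals the original free energy F(φ(t)) = (1/2)⟨φ(t), Lφ(t)⟩ + f(φ(t)) for all t, so the energy-quadratization reformulation is consistent with the original gradient flow. -/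

import Mathlib

open scoped RealInnerProductSpace
open Matrix

noncomputable section

abbrev Vec (n : ℕ) := EuclideanSpace ℝ (Fin n)

/-- Action of a matrix on a Euclidean vector. -/
def mv {n : ℕ} (A : Matrix (Fin n) (Fin n) ℝ) (x : Vec n) : Vec n :=
  Matrix.toEuclideanLin A x

/-- consistency of the energy-quadratization reformulation:
if `(φ, q)` solves the EQ system `φ' = −M(Lφ + 2q∇q₀(φ))`, `q' = ⟨∇q₀(φ), φ'⟩` with the
consistent initial condition `q(0) = q₀(φ(0))`, where `q₀ = √(f + C)`, then
`q(t) = q₀(φ(t))` on `[0, T]`, and the quadratized energy equals the original free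
energy along the solution. -/
theorem eq_reformulation_consistent {n : ℕ}
    (f : Vec n → ℝ) (hf : ContDiff ℝ 1 f)
    (C : ℝ) (hfC : ∀ x : Vec n, 0 < f x + C)
    (q₀ : Vec n → ℝ) (hq₀ : ∀ x : Vec n, q₀ x = Real.sqrt (f x + C))
    (L M : Matrix (Fin n) (Fin n) ℝ) (hL : L.IsSymm)
    (T : ℝ) (φ : ℝ → Vec n) (q : ℝ → ℝ)
    (hφ : ∀ t ∈ Set.Icc (0 : ℝ) T,
      HasDerivAt φ (-(mv M (mv L (φ t) + (2 * q t) • gradient q₀ (φ t)))) t)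
    (hq : ∀ t ∈ Set.Icc (0 : ℝ) T,
      HasDerivAt q
        ⟪gradient q₀ (φ t), -(mv M (mv L (φ t) + (2 * q t) • gradient q₀ (φ t)))⟫ t)
    (h0 : q 0 = q₀ (φ 0)) :
    ∀ t ∈ Set.Icc (0 : ℝ) T,
      q t = q₀ (φ t) ∧
      (1 / 2 : ℝ) * ⟪φ t, mv L (φ t)⟫ + (q t) ^ 2 - C
        = (1 / 2 : ℝ) * ⟪φ t, mv L (φ t)⟫ + f (φ t) := by
  have hq₀fun : q₀ = fun x => Real.sqrt (f x + C) := funext hq₀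
  have hdiff : ∀ x : Vec n, DifferentiableAt ℝ q₀ x := by
    intro x
    rw [hq₀fun]
    exact DifferentiableAt.sqrt ((hf.differentiable one_ne_zero x).add_const C)
      (ne_of_gt (hfC x))
  set g : ℝ → ℝ := fun t => q t - q₀ (φ t) with hg
  have hgderiv : ∀ t ∈ Set.Icc (0:ℝ) T, HasDerivAt g 0 t := by
    intro t ht
    have h1 := hq t ht
    have h2 : HasDerivAt (fun s => q₀ (φ s))
        ⟪gradient q₀ (φ t), -(mv M (mv L (φ t) + (2 * q t) • gradient q₀ (φ t)))⟫ t := by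
      have hgrad := (hdiff (φ t)).hasGradientAt
      have := hgrad.hasFDerivAt.comp_hasDerivAt t (hφ t ht)
      exact this
    have h3 := h1.sub h2
    rw [sub_self] at h3
    exact h3
  have hconst : ∀ t ∈ Set.Icc (0:ℝ) T, g t = g 0 := by
    intro t ht
    exact constant_of_has_deriv_right_zero
      (fun s hs => ((hgderiv s hs).continuousAt).continuousWithinAt)
      (fun s hs => ((hgderiv s (Set.mem_Icc_of_Ico hs)).hasDerivWithinAt)) t ht
  intro t ht
  have hqt : q t = q₀ (φ t) := by
    have := hconst t ht
    simp only [hg] at this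
    rw [h0] at this
    linarith
  refine ⟨hqt, ?_⟩
  have : q t ^ 2 = f (φ t) + C := by
    rw [hqt, hq₀ (φ t), Real.sq_sqrt (le_of_lt (hfC (φ t)))]
  linarith

end
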